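/- Let q = (q_0, ..., q_5) ∈ ℤ^6 satisfy the Bazaikin freeness condition, and suppose (1/2)(q_0^2 + ... + q_5^2) = 15 and |σ_3(q)| = 40. Then q is, up to reordering the entries and an overall sign change, equal to (−5, 1, 1, 1, 1, 1). (Geometrically: a Bazaikin space with the homeomorphism invariants p_1 = 15 and s = 5 of the Berger space must be the Berger space itself.) -/

import Mathlib

/-- The `k`-th elementary symmetric polynomial of the tuple `q`. -/
def esymm {n : ℕ} (k : ℕ) (q : Fin n → ℤ) : ℤ :=
  ∑ t ∈ Finset.univ.powersetCard k, ∏ i ∈ t, q i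

/-- The Bazaikin freeness condition: the entries sum to zero, all entries are odd,
and `gcd (q a + q b, q c + q d) = 2` for all pairwise distinct indices `a b c d`. -/
def BazaikinFree (q : Fin 6 → ℤ) : Prop :=
  (∑ i, q i) = 0 ∧ (∀ i, Odd (q i)) ∧
    ∀ a b c d : Fin 6, a ≠ b → a ≠ c → a ≠ d → b ≠ c → b ≠ d → c ≠ d →
      Int.gcd (q a + q b) (q c + q d) = 2

/-- The positive curvature condition: there is an index `i₀` such that
`q i + q j > 0` for all pairs `i < j` avoiding `i₀`, or `q i + q j < 0` for all such pairs. -/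
def PosCurv (q : Fin 6 → ℤ) : Prop :=
  ∃ i₀ : Fin 6,
    (∀ i j : Fin 6, i < j → i ≠ i₀ → j ≠ i₀ → 0 < q i + q j) ∨
    (∀ i j : Fin 6, i < j → i ≠ i₀ → j ≠ i₀ → q i + q j < 0)

def mkF (l : List (Fin 6)) (h : (↑l : Multiset (Fin 6)).Nodup := by decide) : Finset (Fin 6) :=
  ⟨↑l, h⟩

set_option maxRecDepth 40000 in
lemma esymm3_expand (q : Fin 6 → ℤ) : esymm 3 q =
    q 0*q 1*q 2 + q 0*q 1*q 3 + q 0*q 1*q 4 + q 0*q 1*q 5 +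
    q 0*q 2*q 3 + q 0*q 2*q 4 + q 0*q 2*q 5 + q 0*q 3*q 4 + q 0*q 3*q 5 + q 0*q 4*q 5 +
    q 1*q 2*q 3 + q 1*q 2*q 4 + q 1*q 2*q 5 + q 1*q 3*q 4 + q 1*q 3*q 5 + q 1*q 4*q 5 +
    q 2*q 3*q 4 + q 2*q 3*q 5 + q 2*q 4*q 5 + q 3*q 4*q 5 := by
  have h : Finset.powersetCard 3 (Finset.univ : Finset (Fin 6)) =
      ⟨↑[mkF [0,1,2], mkF [0,1,3], mkF [0,1,4], mkF [0,1,5], mkF [0,2,3], mkF [0,2,4],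
         mkF [0,2,5], mkF [0,3,4], mkF [0,3,5], mkF [0,4,5], mkF [1,2,3], mkF [1,2,4],
         mkF [1,2,5], mkF [1,3,4], mkF [1,3,5], mkF [1,4,5], mkF [2,3,4], mkF [2,3,5],
         mkF [2,4,5], mkF [3,4,5]], by decide⟩ := by decide
  unfold esymm
  rw [h]
  show (Multiset.map (fun t => ∏ i ∈ t, q i) _).sum = _
  simp only [Multiset.map_coe, Multiset.sum_coe, List.map, List.sum_cons, List.sum_nil, mkF,
    Finset.prod_mk, Multiset.prod_coe, List.prod_cons, List.prod_nil]
  ring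

/-- On a finset where `f` is bounded below by `c` and sums to `card * c`, `f` equals `c`. -/
lemma sum_const_eq {α : Type*} [DecidableEq α] (s : Finset α) (f : α → ℤ) (c : ℤ)
    (hsum : ∑ k ∈ s, f k = s.card * c) (hlb : ∀ k ∈ s, c ≤ f k) :
    ∀ k ∈ s, f k = c := by
  intro k hk
  by_contra hne
  have h0 : ∑ j ∈ s, (f j - c) = 0 := by
    rw [Finset.sum_sub_distrib, hsum, Finset.sum_const, nsmul_eq_mul]; ring
  have hpos : 0 < ∑ j ∈ s, (f j - c) :=
    Finset.sum_pos' (fun j hj => by linarith [hlb j hj])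
      ⟨k, hk, by have := hlb k hk; omega⟩
  omega

lemma builder (q : Fin 6 → ℤ) (ε : ℤ) (hε : ε = 1 ∨ ε = -1) (i₀ : Fin 6)
    (h0 : ε * q i₀ = -5) (h1 : ∀ j, j ≠ i₀ → ε * q j = 1) :
    ∃ (σ : Equiv.Perm (Fin 6)) (ε' : ℤ), (ε' = 1 ∨ ε' = -1) ∧
      ∀ i : Fin 6, ε' * q (σ i) = (![-5, 1, 1, 1, 1, 1] : Fin 6 → ℤ) i := by
  refine ⟨Equiv.swap 0 i₀, ε, hε, ?_⟩
  intro i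
  rcases eq_or_ne i 0 with rfl | hi
  · rw [Equiv.swap_apply_left]
    simpa using h0
  · have hne : Equiv.swap 0 i₀ i ≠ i₀ := by
      intro hcon
      exact hi ((Equiv.swap 0 i₀).injective (by rw [hcon, Equiv.swap_apply_left]))
    rw [h1 _ hne]
    have hval : ∀ j : Fin 6, j ≠ 0 → (![-5,1,1,1,1,1] : Fin 6 → ℤ) j = 1 := by decide
    exact (hval i hi).symm

theorem Berger_homeo_invariants_determine_Berger (q : Fin 6 → ℤ) (h : BazaikinFree q)
    (hp1 : (∑ i, q i ^ 2) = 2 * 15) (hs : |esymm 3 q| = 40) :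
    ∃ (σ : Equiv.Perm (Fin 6)) (ε : ℤ), (ε = 1 ∨ ε = -1) ∧
      ∀ i : Fin 6, ε * q (σ i) = (![-5, 1, 1, 1, 1, 1] : Fin 6 → ℤ) i := by
  obtain ⟨hsum, hodd, -⟩ := h
  have hsume := hsum
  have hp1e := hp1
  rw [Fin.sum_univ_six] at hsume hp1e
  have hmod : ∀ i, q i % 2 = 1 := fun i => Int.odd_iff.mp (hodd i)
  have hsq1 : ∀ i, 1 ≤ q i ^ 2 := by
    intro i
    have h0 : q i ≠ 0 := by have := hmod i; omega
    nlinarith [Int.one_le_abs h0, sq_abs (q i)]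
  have hcard : ∀ i : Fin 6, (Finset.univ.erase i).card = 5 := by
    intro i
    rw [Finset.card_erase_of_mem (Finset.mem_univ _)]
    simp
  have hb : ∀ i : Fin 6, q i ^ 2 ≤ 25 := by
    intro i
    have hadd := Finset.add_sum_erase Finset.univ (fun k => q k ^ 2) (Finset.mem_univ i)
    have h5 : (5:ℤ) ≤ ∑ k ∈ Finset.univ.erase i, q k ^ 2 := by
      have h := Finset.card_nsmul_le_sum (Finset.univ.erase i) (fun k => q k ^ 2) 1
        (fun k _ => hsq1 k)
      rw [hcard i] at h
      simpa using h
    linarith [hadd, hp1, h5]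
  have hB : ∀ i : Fin 6, -5 ≤ q i ∧ q i ≤ 5 := by
    intro i
    constructor <;> nlinarith [hb i, sq_nonneg (q i - 5), sq_nonneg (q i + 5)]
  -- p3 = 3 e3
  have hp3 : q 0^3 + q 1^3 + q 2^3 + q 3^3 + q 4^3 + q 5^3 = 3 * esymm 3 q := by
    rw [esymm3_expand]
    linear_combination ((q 0 + q 1 + q 2 + q 3 + q 4 + q 5)^2 -
      3*(q 0*q 1 + q 0*q 2 + q 0*q 3 + q 0*q 4 + q 0*q 5 + q 1*q 2 + q 1*q 3 + q 1*q 4 +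
         q 1*q 5 + q 2*q 3 + q 2*q 4 + q 2*q 5 + q 3*q 4 + q 3*q 5 + q 4*q 5)) * hsume
  have h40 : esymm 3 q = 40 ∨ esymm 3 q = -40 := (abs_eq (by norm_num : (0:ℤ) ≤ 40)).mp hs
  -- there is an entry equal to ±5
  have hexists : ∃ i : Fin 6, q i = 5 ∨ q i = -5 := by
    by_contra hno
    push_neg at hno
    have hc : ∀ i : Fin 6, -3 ≤ q i ∧ q i ≤ 3 := by
      intro i
      have h5 := hno i
      have := hB i
      have := hmod i
      omega
    have hcube : ∀ i : Fin 6, -3 * q i ^ 2 ≤ q i ^ 3 ∧ q i ^ 3 ≤ 3 * q i ^ 2 := by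
      intro i
      have h1 := (hc i).1
      have h2 := (hc i).2
      constructor <;> nlinarith [sq_nonneg (q i)]
    rcases h40 with h40 | h40 <;>
      linarith [(hcube 0).1, (hcube 0).2, (hcube 1).1, (hcube 1).2, (hcube 2).1, (hcube 2).2,
        (hcube 3).1, (hcube 3).2, (hcube 4).1, (hcube 4).2, (hcube 5).1, (hcube 5).2, hp1e, hp3]
  obtain ⟨i₀, hq5⟩ := hexists
  have hs25 : q i₀ ^ 2 = 25 := by rcases hq5 with h | h <;> rw [h] <;> norm_num
  have hadd := Finset.add_sum_erase Finset.univ (fun k => q k ^ 2) (Finset.mem_univ i₀)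
  have hsum5 : ∑ k ∈ Finset.univ.erase i₀, q k ^ 2 = 5 := by
    rw [hp1] at hadd; linarith
  have haddq := Finset.add_sum_erase Finset.univ (fun k => q k) (Finset.mem_univ i₀)
  have hsumq : ∑ k ∈ Finset.univ.erase i₀, q k = -q i₀ := by
    rw [hsum] at haddq; linarith
  have sq1 : ∀ k ∈ Finset.univ.erase i₀, q k ^ 2 = 1 := by
    apply sum_const_eq
    · rw [hsum5, hcard i₀]; norm_num
    · exact fun k _ => hsq1 k
  have pm : ∀ k : Fin 6, k ≠ i₀ → q k = 1 ∨ q k = -1 := by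
    intro k hk
    have h1 := sq1 k (Finset.mem_erase.mpr ⟨hk, Finset.mem_univ k⟩)
    have h2 : (q k - 1) * (q k + 1) = 0 := by linear_combination h1
    rcases mul_eq_zero.mp h2 with h | h
    · left; omega
    · right; omega
  rcases hq5 with h5 | h5
  · -- q i₀ = 5 : all others are -1, take ε = -1
    have hall : ∀ k ∈ Finset.univ.erase i₀, q k = -1 := by
      apply sum_const_eq
      · rw [hsumq, h5, hcard i₀]; norm_num
      · intro k hk
        rcases pm k (Finset.mem_erase.mp hk).1 with h | h <;> omega
    refine builder q (-1) (Or.inr rfl) i₀ (by rw [h5]; norm_num) ?_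
    intro j hj
    rw [hall j (Finset.mem_erase.mpr ⟨hj, Finset.mem_univ j⟩)]
    norm_num
  · -- q i₀ = -5 : all others are 1, take ε = 1
    have hall : ∀ k ∈ Finset.univ.erase i₀, -q k = -1 := by
      apply sum_const_eq
      · rw [Finset.sum_neg_distrib, hsumq, h5, hcard i₀]; norm_num
      · intro k hk
        rcases pm k (Finset.mem_erase.mp hk).1 with h | h <;> omega
    refine builder q 1 (Or.inl rfl) i₀ (by rw [h5]; norm_num) ?_
    intro j hj
    have := hall j (Finset.mem_erase.mpr ⟨hj, Finset.mem_univ j⟩)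
    omega
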